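/- (Pointwise associative calibration inequality, proved in Section 2.2.1) For any orthonormal vectors x, y, z ∈ ℝ⁷ one has |φ(x,y,z)| ≤ 1, with equality if and only if x×y = z or x×y = −z. -/

import Mathlib

open scoped RealInnerProductSpace

noncomputable section

abbrev E7 : Type := EuclideanSpace ℝ (Fin 7)

/-- The standard orthonormal basis vectors of ℝ⁷. -/
def e7 (i : Fin 7) : E7 := EuclideanSpace.single i 1

/-- Kronecker delta. -/
def kd7 (i j : Fin 7) : ℝ := if i = j then 1 else 0

/-- `e^{abc}(e_i, e_j, e_k)` : component of a wedge of three dual basis covectors. -/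
def trip7 (a b c i j k : Fin 7) : ℝ :=
  Matrix.det !![kd7 a i, kd7 a j, kd7 a k;
                kd7 b i, kd7 b j, kd7 b k;
                kd7 c i, kd7 c j, kd7 c k]

/-- `e^{abcd}(e_i, e_j, e_k, e_l)` : component of a wedge of four dual basis covectors. -/
def quad7 (a b c d i j k l : Fin 7) : ℝ :=
  Matrix.det !![kd7 a i, kd7 a j, kd7 a k, kd7 a l;
                kd7 b i, kd7 b j, kd7 b k, kd7 b l;
                kd7 c i, kd7 c j, kd7 c k, kd7 c l;
                kd7 d i, kd7 d j, kd7 d k, kd7 d l]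

/-- Components `φ_{ijk}` of the standard G₂ 3-form
`φ = e¹²³ + e¹⁴⁵ − e¹⁶⁷ + e²⁴⁶ − e²⁷⁵ + e³⁴⁷ − e³⁵⁶` (indices shifted to be 0-based). -/
def phiC (i j k : Fin 7) : ℝ :=
  trip7 0 1 2 i j k + trip7 0 3 4 i j k - trip7 0 5 6 i j k
  + trip7 1 3 5 i j k - trip7 1 6 4 i j k + trip7 2 3 6 i j k - trip7 2 4 5 i j k

/-- Components `ψ_{ijkl}` of the Hodge dual 4-form
`ψ = e⁴⁵⁶⁷ − e²³⁴⁵ + e²³⁶⁷ − e³¹⁴⁶ + e³¹⁷⁵ − e¹²⁴⁷ + e¹²⁵⁶` (0-based). -/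
def psiC (i j k l : Fin 7) : ℝ :=
  quad7 3 4 5 6 i j k l - quad7 1 2 3 4 i j k l + quad7 1 2 5 6 i j k l
  - quad7 2 0 3 5 i j k l + quad7 2 0 6 4 i j k l
  - quad7 0 1 3 6 i j k l + quad7 0 1 4 5 i j k l

/-- The standard G₂ 3-form evaluated on arbitrary vectors. -/
def phi7 (x y z : E7) : ℝ := ∑ i, ∑ j, ∑ k, x i * y j * z k * phiC i j k

/-- The 4-form ψ evaluated on arbitrary vectors. -/
def psi7 (x y z w : E7) : ℝ :=
  ∑ i, ∑ j, ∑ k, ∑ l, x i * y j * z k * w l * psiC i j k l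

/-- The cross product on ℝ⁷, characterized by `⟨x × y, z⟩ = φ(x,y,z)`. -/
def cross7 (x y : E7) : E7 := (WithLp.equiv 2 (Fin 7 → ℝ)).symm fun k => phi7 x y (e7 k)

/-- The vector-valued 3-form χ, characterized by `⟨χ(x,y,z), w⟩ = ψ(x,y,z,w)`. -/
def chi7 (x y z : E7) : E7 := (WithLp.equiv 2 (Fin 7 → ℝ)).symm fun l => psi7 x y z (e7 l)

lemma tsum3 (x y z : E7) (a b c : Fin 7) :
    ∑ i, ∑ j, ∑ k, x i * y j * z k * (kd7 a i * (kd7 b j * kd7 c k)) = x a * y b * z c := by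
  simp [kd7, mul_ite, Finset.sum_ite_eq]

set_option maxHeartbeats 1000000 in
lemma trip_sum (x y z : E7) (a b c : Fin 7) :
    ∑ i, ∑ j, ∑ k, x i * y j * z k * trip7 a b c i j k =
    x a*y b*z c - x a*y c*z b - x b*y a*z c + x b*y c*z a + x c*y a*z b - x c*y b*z a := by
  have : ∀ i j k, trip7 a b c i j k =
      kd7 a i * (kd7 b j * kd7 c k) - kd7 a i * (kd7 c j * kd7 b k)
      - kd7 b i * (kd7 a j * kd7 c k) + kd7 b i * (kd7 c j * kd7 a k)
      + kd7 c i * (kd7 a j * kd7 b k) - kd7 c i * (kd7 b j * kd7 a k) := by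
    intro i j k
    simp [trip7, Matrix.det_fin_three]; ring
  simp only [this, mul_sub, mul_add, Finset.sum_sub_distrib, Finset.sum_add_distrib, tsum3]

def det3 (x y z : E7) (a b c : Fin 7) : ℝ :=
  x a*y b*z c - x a*y c*z b - x b*y a*z c + x b*y c*z a + x c*y a*z b - x c*y b*z a

set_option maxHeartbeats 1000000 in
lemma phi7_expand (x y z : E7) : phi7 x y z =
    det3 x y z 0 1 2 + det3 x y z 0 3 4 - det3 x y z 0 5 6
    + det3 x y z 1 3 5 - det3 x y z 1 6 4 + det3 x y z 2 3 6 - det3 x y z 2 4 5 := by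
  simp only [phi7, phiC, mul_add, mul_sub, Finset.sum_add_distrib, Finset.sum_sub_distrib,
    trip_sum, det3]

lemma cross7_apply (x y : E7) (k : Fin 7) : cross7 x y k = phi7 x y (e7 k) := rfl


lemma e7_app (a b : Fin 7) : e7 a b = kd7 b a := by
  simp [e7, EuclideanSpace.single_apply, kd7]

lemma cross7_eval_0 (x y : E7) : cross7 x y 0 = (x 1*y 2 - x 2*y 1) + (x 3*y 4 - x 4*y 3) - (x 5*y 6 - x 6*y 5) := by
  show phi7 x y (e7 0) = _
  rw [phi7_expand]
  simp only [det3, e7_app, kd7]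
  simp (config := { decide := true }) only [if_true, if_false, reduceIte]
  ring

lemma cross7_eval_1 (x y : E7) : cross7 x y 1 = (x 2*y 0 - x 0*y 2) + (x 3*y 5 - x 5*y 3) + (x 4*y 6 - x 6*y 4) := by
  show phi7 x y (e7 1) = _
  rw [phi7_expand]
  simp only [det3, e7_app, kd7]
  simp (config := { decide := true }) only [if_true, if_false, reduceIte]
  ring

lemma cross7_eval_2 (x y : E7) : cross7 x y 2 = (x 0*y 1 - x 1*y 0) + (x 3*y 6 - x 6*y 3) - (x 4*y 5 - x 5*y 4) := by
  show phi7 x y (e7 2) = _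
  rw [phi7_expand]
  simp only [det3, e7_app, kd7]
  simp (config := { decide := true }) only [if_true, if_false, reduceIte]
  ring

lemma cross7_eval_3 (x y : E7) : cross7 x y 3 = (x 4*y 0 - x 0*y 4) + (x 5*y 1 - x 1*y 5) + (x 6*y 2 - x 2*y 6) := by
  show phi7 x y (e7 3) = _
  rw [phi7_expand]
  simp only [det3, e7_app, kd7]
  simp (config := { decide := true }) only [if_true, if_false, reduceIte]
  ring

lemma cross7_eval_4 (x y : E7) : cross7 x y 4 = (x 0*y 3 - x 3*y 0) - (x 1*y 6 - x 6*y 1) + (x 2*y 5 - x 5*y 2) := by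
  show phi7 x y (e7 4) = _
  rw [phi7_expand]
  simp only [det3, e7_app, kd7]
  simp (config := { decide := true }) only [if_true, if_false, reduceIte]
  ring

lemma cross7_eval_5 (x y : E7) : cross7 x y 5 = (x 0*y 6 - x 6*y 0) + (x 1*y 3 - x 3*y 1) - (x 2*y 4 - x 4*y 2) := by
  show phi7 x y (e7 5) = _
  rw [phi7_expand]
  simp only [det3, e7_app, kd7]
  simp (config := { decide := true }) only [if_true, if_false, reduceIte]
  ring

lemma cross7_eval_6 (x y : E7) : cross7 x y 6 = -(x 0*y 5 - x 5*y 0) + (x 1*y 4 - x 4*y 1) + (x 2*y 3 - x 3*y 2) := by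
  show phi7 x y (e7 6) = _
  rw [phi7_expand]
  simp only [det3, e7_app, kd7]
  simp (config := { decide := true }) only [if_true, if_false, reduceIte]
  ring
lemma inner7 (x y : E7) : ⟪x, y⟫ = ∑ i, x i * y i := by
  rw [PiLp.inner_apply]; simp [RCLike.inner_apply]
  exact Finset.sum_congr rfl (fun i _ => mul_comm _ _)

lemma inner_cross (x y z : E7) : ⟪cross7 x y, z⟫ = phi7 x y z := by
  rw [inner7, Fin.sum_univ_seven, cross7_eval_0, cross7_eval_1, cross7_eval_2, cross7_eval_3,
    cross7_eval_4, cross7_eval_5, cross7_eval_6, phi7_expand]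
  simp only [det3]
  ring

lemma cross_norm (x y : E7) : ⟪cross7 x y, cross7 x y⟫ = ⟪x,x⟫ * ⟪y,y⟫ - ⟪x,y⟫ * ⟪x,y⟫ := by
  simp only [inner7]
  rw [Fin.sum_univ_seven, Fin.sum_univ_seven (f := fun i => x i * x i),
    Fin.sum_univ_seven (f := fun i => y i * y i), Fin.sum_univ_seven (f := fun i => x i * y i),
    cross7_eval_0, cross7_eval_1, cross7_eval_2, cross7_eval_3,
    cross7_eval_4, cross7_eval_5, cross7_eval_6]
  ring


/-- Pointwise associative calibration inequality: for orthonormal `x, y, z`,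
`|φ(x,y,z)| ≤ 1`, with equality iff `x × y = ±z`. -/
theorem assoc_calibration_inequality (x y z : E7) (h : Orthonormal ℝ ![x, y, z]) :
    |phi7 x y z| ≤ 1 ∧ (|phi7 x y z| = 1 ↔ cross7 x y = z ∨ cross7 x y = -z) := by
  have hx : ‖x‖ = 1 := by simpa using h.1 0
  have hy : ‖y‖ = 1 := by simpa using h.1 1
  have hz : ‖z‖ = 1 := by simpa using h.1 2
  have hxy : ⟪x, y⟫ = 0 := by
    have := h.2 (show (0 : Fin 3) ≠ 1 by decide)
    simpa using this
  have hcc : ⟪cross7 x y, cross7 x y⟫ = 1 := by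
    rw [cross_norm, hxy, real_inner_self_eq_norm_mul_norm, real_inner_self_eq_norm_mul_norm,
      hx, hy]
    ring
  have hzz : ⟪z, z⟫ = 1 := by
    rw [real_inner_self_eq_norm_mul_norm, hz]; ring
  have hcn : ‖cross7 x y‖ = 1 := by
    have h1 := real_inner_self_eq_norm_mul_norm (cross7 x y)
    nlinarith [norm_nonneg (cross7 x y)]
  have hphi : phi7 x y z = ⟪cross7 x y, z⟫ := (inner_cross x y z).symm
  constructor
  · rw [hphi]
    calc |⟪cross7 x y, z⟫| ≤ ‖cross7 x y‖ * ‖z‖ := abs_real_inner_le_norm _ _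
    _ = 1 := by rw [hcn, hz]; ring
  · constructor
    · intro heq
      rw [hphi] at heq
      rcases (abs_eq (by norm_num : (0:ℝ) ≤ 1)).mp heq with h1 | h1
      · left
        have h0 : ⟪cross7 x y - z, cross7 x y - z⟫ = 0 := by
          rw [inner_sub_sub_self, hcc, hzz]
          linarith [real_inner_comm z (cross7 x y), h1]
        exact sub_eq_zero.mp (inner_self_eq_zero.mp h0)
      · right
        have h0 : ⟪cross7 x y + z, cross7 x y + z⟫ = 0 := by
          rw [inner_add_add_self, hcc, hzz]
          linarith [real_inner_comm z (cross7 x y), h1]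
        exact eq_neg_of_add_eq_zero_left (inner_self_eq_zero.mp h0)
    · rintro (rfl | hc)
      · rw [hphi, hcc]; norm_num
      · rw [hphi, hc, inner_neg_left, hzz]; norm_num
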